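/- Let H be a real Hilbert space, V, Q closed subspaces of a product structure, and define for pairs (u,p) the norm ‖(u,p)‖² = ‖u‖_V² + ‖p‖_Q². If b : Q × V → ℝ is bounded bilinear and satisfies the inf-sup condition: ∀ p ∈ Q₀, ∃ v ∈ V₀, v ≠ 0, b(p, v) ≥ K_b‖p‖_Q‖v‖_V with K_b > 0, and a : V × V → ℝ is bounded, symmetric, and coercive on the kernel K_V = {v ∈ V₀ : b(q,v) = 0 ∀ q ∈ Q₀} with constant α > 0, then the saddle-point bilinear form B((u,p),(v,q)) = a(u,v) + b(p,v) + b(q,u) satisfies an inf-sup condition on V₀ × Q₀ with a constant depending only on K_b, α and the continuity constants (Brezzi's theorem). -/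

import Mathlib

open InnerProductSpace

set_option maxHeartbeats 1000000 in
theorem stmt_8 {V Q : Type*}
    [NormedAddCommGroup V] [InnerProductSpace ℝ V] [CompleteSpace V]
    [NormedAddCommGroup Q] [InnerProductSpace ℝ Q] [CompleteSpace Q]
    (V₀ : Submodule ℝ V) (Q₀ : Submodule ℝ Q)
    (hV₀ : IsClosed (V₀ : Set V)) (hQ₀ : IsClosed (Q₀ : Set Q))
    (a : V →ₗ[ℝ] V →ₗ[ℝ] ℝ) (b : Q →ₗ[ℝ] V →ₗ[ℝ] ℝ)
    (Ca Cb : ℝ) (hCa : ∀ u v, |a u v| ≤ Ca * ‖u‖ * ‖v‖)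
    (hCb : ∀ p v, |b p v| ≤ Cb * ‖p‖ * ‖v‖)
    (hsym : ∀ u v, a u v = a v u)
    (α : ℝ) (hα : 0 < α)
    (hcoer : ∀ v ∈ V₀, (∀ q ∈ Q₀, b q v = 0) → a v v ≥ α * ‖v‖ ^ 2)
    (Kb : ℝ) (hKb : 0 < Kb)
    (hinfsup : ∀ p ∈ Q₀, ∃ v ∈ V₀, v ≠ 0 ∧ b p v ≥ Kb * ‖p‖ * ‖v‖) :
    ∃ KB > 0, ∀ u ∈ V₀, ∀ p ∈ Q₀, ∃ v ∈ V₀, ∃ q ∈ Q₀, ¬(v = 0 ∧ q = 0) ∧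
      a u v + b p v + b q u ≥
        KB * Real.sqrt (‖u‖ ^ 2 + ‖p‖ ^ 2) * Real.sqrt (‖v‖ ^ 2 + ‖q‖ ^ 2) := by
  classical
  haveI : CompleteSpace V₀ := hV₀.completeSpace_coe
  haveI : CompleteSpace Q₀ := hQ₀.completeSpace_coe
  -- nonnegative continuity constants
  set c : ℝ := max Ca 0 with hcdef
  have hc0 : (0:ℝ) ≤ c := le_max_right _ _
  have hCa' : ∀ u v : V, |a u v| ≤ c * ‖u‖ * ‖v‖ := by
    intro u v
    refine (hCa u v).trans ?_
    exact mul_le_mul_of_nonneg_right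
      (mul_le_mul_of_nonneg_right (le_max_left _ _) (norm_nonneg _)) (norm_nonneg _)
  set cb : ℝ := max Cb 0 with hcbdef
  have hcb0 : (0:ℝ) ≤ cb := le_max_right _ _
  have hCb' : ∀ p v, |b p v| ≤ cb * ‖p‖ * ‖v‖ := by
    intro p v
    refine (hCb p v).trans ?_
    exact mul_le_mul_of_nonneg_right
      (mul_le_mul_of_nonneg_right (le_max_left _ _) (norm_nonneg _)) (norm_nonneg _)
  -- the bilinear form b restricted to Q₀ × V₀ as a continuous bilinear map
  let bl : Q₀ →ₗ[ℝ] V₀ →ₗ[ℝ] ℝ := LinearMap.mk₂ ℝ (fun q v => b q v)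
    (fun q q' v => by simp) (fun r q v => by simp) (fun q v v' => by simp)
    (fun r q v => by simp)
  let bC : Q₀ →L[ℝ] V₀ →L[ℝ] ℝ := LinearMap.mkContinuous₂ bl cb (fun q v => by
    have := hCb' (q : Q) (v : V)
    simpa [bl, Real.norm_eq_abs] using this)
  -- the operator S : Q₀ → V₀ representing b, and its adjoint T
  let S : Q₀ →L[ℝ] V₀ :=
    { toFun := fun q => (toDual ℝ V₀).symm (bC q)
      map_add' := fun q q' => by simp
      map_smul' := fun r q => by simp
      cont := (toDual ℝ V₀).symm.continuous.comp bC.continuous }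
  have hS : ∀ (q : Q₀) (v : V₀), ⟪S q, v⟫_ℝ = b q v := fun q v =>
    InnerProductSpace.toDual_symm_apply
  let T : V₀ →L[ℝ] Q₀ := ContinuousLinearMap.adjoint S
  have hT : ∀ (v : V₀) (q : Q₀), ⟪T v, q⟫_ℝ = b q v := by
    intro v q
    rw [show T = ContinuousLinearMap.adjoint S from rfl,
      ContinuousLinearMap.adjoint_inner_left, real_inner_comm, hS]
  -- S is bounded below
  have hSlow : ∀ q : Q₀, Kb * ‖q‖ ≤ ‖S q‖ := by
    intro q
    obtain ⟨v, hvV, hv0, hbv⟩ := hinfsup (q : Q) q.2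
    have h1 : Kb * ‖q‖ * ‖v‖ ≤ ⟪S q, (⟨v, hvV⟩ : V₀)⟫_ℝ := by
      rw [hS]; exact hbv
    have h2 : ⟪S q, (⟨v, hvV⟩ : V₀)⟫_ℝ ≤ ‖S q‖ * ‖v‖ := by
      have := real_inner_le_norm (S q) (⟨v, hvV⟩ : V₀)
      simpa using this
    have hv0' : (0:ℝ) < ‖v‖ := norm_pos_iff.mpr hv0
    have := h1.trans h2
    exact le_of_mul_le_mul_right this hv0'
  -- range of S is closed
  have hRclosed : IsClosed ((LinearMap.range (S : Q₀ →ₗ[ℝ] V₀) : Submodule ℝ V₀) : Set V₀) := by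
    have hanti : AntilipschitzWith (Kb⁻¹).toNNReal S := by
      refine S.antilipschitz_of_bound (fun q => ?_)
      have hcoe : ((Kb⁻¹).toNNReal : ℝ) = Kb⁻¹ :=
        Real.coe_toNNReal _ (inv_pos.mpr hKb).le
      rw [hcoe, inv_mul_eq_div, le_div_iff₀ hKb]
      linarith [hSlow q]
    have := hanti.isClosed_range S.uniformContinuous
    simpa [LinearMap.coe_range] using this
  -- the kernel of T is the orthogonal of range S
  have hKR : LinearMap.ker (T : V₀ →ₗ[ℝ] Q₀) = (LinearMap.range (S : Q₀ →ₗ[ℝ] V₀))ᗮ := by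
    ext v
    simp only [LinearMap.mem_ker, Submodule.mem_orthogonal, ContinuousLinearMap.coe_coe]
    constructor
    · rintro h x ⟨q, rfl⟩
      have : ⟪T v, q⟫_ℝ = ⟪v, S q⟫_ℝ := ContinuousLinearMap.adjoint_inner_left S q v
      rw [h] at this
      simp only [inner_zero_left] at this
      rw [real_inner_comm]
      exact this.symm
    · intro h
      have h2 : ⟪T v, T v⟫_ℝ = 0 := by
        have : ⟪T v, T v⟫_ℝ = ⟪v, S (T v)⟫_ℝ :=
          ContinuousLinearMap.adjoint_inner_left S (T v) v
        rw [this, real_inner_comm]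
        exact h (S (T v)) ⟨T v, rfl⟩
      exact inner_self_eq_zero.mp h2
  -- elements orthogonal to ker T are in range S
  have hperp_range : ∀ x : V₀, x ∈ (LinearMap.ker (T : V₀ →ₗ[ℝ] Q₀))ᗮ → ∃ w : Q₀, S w = x := by
    intro x hx
    rw [hKR] at hx
    have : (LinearMap.range (S : Q₀ →ₗ[ℝ] V₀))ᗮᗮ = (LinearMap.range (S : Q₀ →ₗ[ℝ] V₀)) := by
      rw [Submodule.orthogonal_orthogonal_eq_closure,
        hRclosed.submodule_topologicalClosure_eq]
    rw [this] at hx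
    exact hx
  -- dual bound: T is bounded below on (ker T)ᗮ
  have hdual : ∀ x : V₀, x ∈ (LinearMap.ker (T : V₀ →ₗ[ℝ] Q₀))ᗮ → Kb * ‖x‖ ≤ ‖T x‖ := by
    intro x hx
    obtain ⟨w, hw⟩ := hperp_range x hx
    rcases eq_or_ne x 0 with rfl | hx0
    · simp
    have hx0' : (0:ℝ) < ‖x‖ := norm_pos_iff.mpr hx0
    have e1 : ⟪x, x⟫_ℝ = ⟪T x, w⟫_ℝ := by
      rw [← hw]
      rw [show T = ContinuousLinearMap.adjoint S from rfl,
        ContinuousLinearMap.adjoint_inner_left]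
    have e2 : ⟪T x, w⟫_ℝ ≤ ‖T x‖ * ‖w‖ := real_inner_le_norm _ _
    have e3 : Kb * ‖w‖ ≤ ‖S w‖ := hSlow w
    rw [hw] at e3
    have e4 : ⟪x, x⟫_ℝ = ‖x‖ ^ 2 := real_inner_self_eq_norm_sq x
    have hTx : (0:ℝ) ≤ ‖T x‖ := norm_nonneg _
    have hwn : (0:ℝ) ≤ ‖w‖ := norm_nonneg _
    nlinarith [e1, e2, e3, e4]
  -- the constant
  set D : ℝ := Kb^2 + α*Kb + c*Kb + c^2 + c*α with hDdef
  have hD : (0:ℝ) < D := by nlinarith [sq_nonneg c, mul_nonneg hc0 hKb.le, mul_nonneg hc0 hα.le]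
  refine ⟨α * Kb^2 / (2*D), div_pos (by positivity) (by linarith), ?_⟩
  set KB : ℝ := α * Kb^2 / (2*D) with hKBdef
  intro u hu p hp
  by_cases hzero : u = 0 ∧ p = 0
  · obtain ⟨rfl, rfl⟩ := hzero
    obtain ⟨v, hvV, hv0, -⟩ := hinfsup 0 Q₀.zero_mem
    refine ⟨v, hvV, 0, Q₀.zero_mem, fun h => hv0 h.1, ?_⟩
    simp [Real.sqrt_zero]
  -- main case
  set uh : V₀ := (⟨u, hu⟩ : V₀) with huhdef
  set ph : Q₀ := (⟨p, hp⟩ : Q₀) with hphdef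
  -- Riesz representative of v ↦ a u v + b p v on V₀
  have hRiesz : ∃ r : V₀, ∀ v : V₀, ⟪r, v⟫_ℝ = a u v + b p v := by
    let F : V₀ →ₗ[ℝ] ℝ :=
      { toFun := fun v => a u v + b p v
        map_add' := fun v v' => by simp; ring
        map_smul' := fun r v => by simp; ring }
    let Fc : V₀ →L[ℝ] ℝ := F.mkContinuous (c*‖u‖ + cb*‖p‖) (fun v => by
      have h1 := hCa' u (v : V)
      have h2 := hCb' p (v : V)
      have h3 : |a u (v:V) + b p (v:V)| ≤ |a u (v:V)| + |b p (v:V)| := abs_add_le _ _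
      have hv : ‖v‖ = ‖(v:V)‖ := rfl
      simp only [F, LinearMap.coe_mk, AddHom.coe_mk, Real.norm_eq_abs, hv]
      nlinarith [norm_nonneg (v:V)])
    exact ⟨(toDual ℝ V₀).symm Fc, fun v => InnerProductSpace.toDual_symm_apply⟩
  obtain ⟨r₁, hr₁⟩ := hRiesz
  obtain ⟨r₂, hr₂⟩ : ∃ r : Q₀, T uh = r := ⟨T uh, rfl⟩
  have hm₁0 : (0:ℝ) ≤ ‖r₁‖ := norm_nonneg _
  have hm₂0 : (0:ℝ) ≤ ‖r₂‖ := norm_nonneg _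
  -- orthogonal decomposition of uh along ker T
  haveI : CompleteSpace (LinearMap.ker (T : V₀ →ₗ[ℝ] Q₀)) :=
    (ContinuousLinearMap.isClosed_ker T).completeSpace_coe
  obtain ⟨u₀, hu₀K, u₁, hu₁, hsum⟩ :=
    (LinearMap.ker (T : V₀ →ₗ[ℝ] Q₀)).exists_add_mem_mem_orthogonal uh
  have hucoe : u = (u₀ : V) + (u₁ : V) := by
    rw [← Submodule.coe_add, ← hsum]
  have hTu₀ : T u₀ = 0 := LinearMap.mem_ker.mp hu₀K
  have hbu₀ : ∀ q : Q₀, b (q : Q) (u₀ : V) = 0 := by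
    intro q
    have := hT u₀ q
    rw [hTu₀] at this
    simpa using this.symm
  -- Estimate 1 : Kb ‖p‖ ≤ ‖r₁‖ + c ‖u‖
  have f1 : Kb * ‖p‖ ≤ ‖r₁‖ + c * ‖u‖ := by
    obtain ⟨w, hwV, hw0, hbw⟩ := hinfsup p hp
    have e1 : ⟪r₁, (⟨w, hwV⟩ : V₀)⟫_ℝ = a u w + b p w := hr₁ _
    have e2 : ⟪r₁, (⟨w, hwV⟩ : V₀)⟫_ℝ ≤ ‖r₁‖ * ‖w‖ := by
      have := real_inner_le_norm r₁ (⟨w, hwV⟩ : V₀)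
      simpa using this
    have e3 : -(c * ‖u‖ * ‖w‖) ≤ a u w := (abs_le.mp (hCa' u w)).1
    have hw0' : (0:ℝ) < ‖w‖ := norm_pos_iff.mpr hw0
    have chain : Kb * ‖p‖ * ‖w‖ ≤ (‖r₁‖ + c * ‖u‖) * ‖w‖ := by nlinarith [hbw]
    exact le_of_mul_le_mul_right chain hw0'
  -- Estimate 2 : Kb ‖u₁‖ ≤ ‖r₂‖
  have hTuh : T uh = T u₁ := by
    rw [hsum, map_add, hTu₀, zero_add]
  have f2 : Kb * ‖u₁‖ ≤ ‖r₂‖ := by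
    rw [← hr₂, hTuh]
    exact hdual u₁ hu₁
  -- Estimate 3 : α ‖u₀‖ ≤ ‖r₁‖ + c ‖u₁‖
  have f3 : α * ‖u₀‖ ≤ ‖r₁‖ + c * ‖u₁‖ := by
    have e1 : ⟪r₁, u₀⟫_ℝ = a u u₀ + b p u₀ := hr₁ u₀
    have e2 : b p (u₀ : V) = 0 := hbu₀ ph
    have e3 : a u (u₀ : V) = a (u₀ : V) (u₀ : V) + a (u₁ : V) (u₀ : V) := by
      rw [hucoe, map_add, LinearMap.add_apply]
    have e4 : a (u₀ : V) (u₀ : V) ≥ α * ‖(u₀ : V)‖ ^ 2 :=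
      hcoer (u₀ : V) u₀.2 (fun q hq => hbu₀ ⟨q, hq⟩)
    have e5 : -(c * ‖(u₁:V)‖ * ‖(u₀:V)‖) ≤ a (u₁ : V) (u₀ : V) :=
      (abs_le.mp (hCa' (u₁:V) (u₀:V))).1
    have e6 : ⟪r₁, u₀⟫_ℝ ≤ ‖r₁‖ * ‖u₀‖ := real_inner_le_norm _ _
    have hn0 : ‖(u₀ : V)‖ = ‖u₀‖ := rfl
    have hn1 : ‖(u₁ : V)‖ = ‖u₁‖ := rfl
    rw [hn0] at e4
    rw [hn1, hn0] at e5
    rcases eq_or_lt_of_le (norm_nonneg u₀) with h0 | h0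
    · rw [← h0]
      nlinarith [norm_nonneg u₁]
    · have chain : α * ‖u₀‖ * ‖u₀‖ ≤ (‖r₁‖ + c * ‖u₁‖) * ‖u₀‖ := by nlinarith
      exact le_of_mul_le_mul_right chain h0
  -- norm of u
  have hnu : ‖u‖ ≤ ‖u₀‖ + ‖u₁‖ := by
    rw [hucoe]
    exact norm_add_le _ _
  obtain ⟨nu, hnudef⟩ : ∃ x : ℝ, ‖u‖ = x := ⟨_, rfl⟩
  obtain ⟨np, hnpdef⟩ : ∃ x : ℝ, ‖p‖ = x := ⟨_, rfl⟩
  obtain ⟨n0, hn0def⟩ : ∃ x : ℝ, ‖u₀‖ = x := ⟨_, rfl⟩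
  obtain ⟨n1, hn1def⟩ : ∃ x : ℝ, ‖u₁‖ = x := ⟨_, rfl⟩
  obtain ⟨m₁, hm₁def⟩ : ∃ x : ℝ, ‖r₁‖ = x := ⟨_, rfl⟩
  obtain ⟨m₂, hm₂def⟩ : ∃ x : ℝ, ‖r₂‖ = x := ⟨_, rfl⟩
  simp only [hnudef, hnpdef, hn0def, hn1def, hm₁def, hm₂def] at f1 f2 f3 hnu hm₁0 hm₂0
  have hnu0 : (0:ℝ) ≤ nu := hnudef ▸ norm_nonneg u
  have hnp0 : (0:ℝ) ≤ np := hnpdef ▸ norm_nonneg p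
  have hn00 : (0:ℝ) ≤ n0 := hn0def ▸ norm_nonneg u₀
  have hn10 : (0:ℝ) ≤ n1 := hn1def ▸ norm_nonneg u₁
  -- key combined estimate
  have A1 : α * Kb * nu ≤ Kb * m₁ + (c + α) * m₂ := by
    have t1 := mul_le_mul_of_nonneg_left hnu (mul_nonneg hα.le hKb.le)
    have t2 := mul_le_mul_of_nonneg_left f3 hKb.le
    have t3 := mul_le_mul_of_nonneg_left f2 hα.le
    have t4 := mul_le_mul_of_nonneg_left f2 hc0
    nlinarith only [t1, t2, t3, t4]
  have A2 : α * Kb^2 * np ≤ α * Kb * m₁ + c * (Kb * m₁ + (c + α) * m₂) := by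
    have t5 := mul_le_mul_of_nonneg_left f1 (mul_nonneg hα.le hKb.le)
    have t6 := mul_le_mul_of_nonneg_left A1 hc0
    nlinarith only [t5, t6]
  have key : α * Kb^2 * (nu + np) ≤ D * (m₁ + m₂) := by
    have t7 := mul_le_mul_of_nonneg_left A1 hKb.le
    have s1 : (0:ℝ) ≤ (c*c + c*α) * m₁ :=
      mul_nonneg (add_nonneg (mul_nonneg hc0 hc0) (mul_nonneg hc0 hα.le)) hm₁0
    have s2 : (0:ℝ) ≤ Kb^2 * m₂ := by positivity
    rw [hDdef]
    nlinarith only [t7, A2, s1, s2]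
  -- m₁ + m₂ is positive
  have hm_pos : (0:ℝ) < m₁ + m₂ := by
    rcases lt_or_ge 0 (m₁ + m₂) with h | h
    · exact h
    · exfalso
      have hD' : D * (m₁ + m₂) ≤ 0 := mul_nonpos_of_nonneg_of_nonpos hD.le h
      have hpos : (0:ℝ) < α * Kb^2 := by positivity
      have hup : nu + np ≤ 0 := by nlinarith only [key, hD', hpos, hnu0, hnp0]
      have h1 : ‖u‖ = 0 := le_antisymm (by rw [hnudef]; linarith) (norm_nonneg u)
      have h2 : ‖p‖ = 0 := le_antisymm (by rw [hnpdef]; linarith) (norm_nonneg p)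
      exact hzero ⟨norm_eq_zero.mp h1, norm_eq_zero.mp h2⟩
  -- choose the test functions v = r₁, q = r₂
  refine ⟨(r₁ : V), r₁.2, (r₂ : Q), r₂.2, ?_, ?_⟩
  · rintro ⟨h1, h2⟩
    have e1 : r₁ = 0 := Subtype.coe_injective h1
    have e2 : r₂ = 0 := Subtype.coe_injective h2
    rw [e1, norm_zero] at hm₁def
    rw [e2, norm_zero] at hm₂def
    rw [← hm₁def, ← hm₂def] at hm_pos
    simp at hm_pos
  · have L1 : a u (r₁ : V) + b p (r₁ : V) = ⟪r₁, r₁⟫_ℝ := (hr₁ r₁).symm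
    have L2 : b (r₂ : Q) u = ⟪r₂, r₂⟫_ℝ := by
      have h := hT uh r₂
      rw [hr₂] at h
      exact h.symm
    have L3 : ⟪r₁, r₁⟫_ℝ = m₁^2 := by
      rw [real_inner_self_eq_norm_sq, hm₁def]
    have L4 : ⟪r₂, r₂⟫_ℝ = m₂^2 := by
      rw [real_inner_self_eq_norm_sq, hm₂def]
    have hnr : ‖(r₁ : V)‖ = m₁ := hm₁def
    have hnT : ‖(r₂ : Q)‖ = m₂ := hm₂def
    rw [L1, L2, L3, L4, hnr, hnT, hnudef, hnpdef]
    -- now a purely scalar inequality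
    have hMsq0 : (0:ℝ) ≤ Real.sqrt (m₁^2 + m₂^2) := Real.sqrt_nonneg _
    have hMsq2 : (Real.sqrt (m₁^2 + m₂^2))^2 = m₁^2 + m₂^2 := Real.sq_sqrt (by positivity)
    have hm₁M : m₁ ≤ Real.sqrt (m₁^2 + m₂^2) := by
      conv_lhs => rw [show m₁ = Real.sqrt (m₁^2) from (Real.sqrt_sq hm₁0).symm]
      exact Real.sqrt_le_sqrt (by nlinarith only [sq_nonneg m₂])
    have hm₂M : m₂ ≤ Real.sqrt (m₁^2 + m₂^2) := by
      conv_lhs => rw [show m₂ = Real.sqrt (m₂^2) from (Real.sqrt_sq hm₂0).symm]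
      exact Real.sqrt_le_sqrt (by nlinarith only [sq_nonneg m₁])
    have hsq0 : (0:ℝ) ≤ Real.sqrt (nu^2 + np^2) := Real.sqrt_nonneg _
    have hsqrt_up : Real.sqrt (nu^2 + np^2) ≤ nu + np := by
      rw [show nu + np = Real.sqrt ((nu + np)^2) from
        (Real.sqrt_sq (by linarith)).symm]
      exact Real.sqrt_le_sqrt (by nlinarith only [mul_nonneg hnu0 hnp0])
    have hKB0 : (0:ℝ) < KB := div_pos (by positivity) (by linarith)
    have step : KB * (nu + np) ≤ Real.sqrt (m₁^2 + m₂^2) := by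
      rw [hKBdef, div_mul_eq_mul_div, div_le_iff₀ (by linarith : (0:ℝ) < 2*D)]
      nlinarith only [key, mul_le_mul_of_nonneg_left hm₁M hD.le,
        mul_le_mul_of_nonneg_left hm₂M hD.le, hD]
    have c1 : KB * Real.sqrt (nu^2 + np^2) ≤ KB * (nu + np) :=
      mul_le_mul_of_nonneg_left hsqrt_up hKB0.le
    have c2 : KB * Real.sqrt (nu^2 + np^2) * Real.sqrt (m₁^2 + m₂^2) ≤
        KB * (nu + np) * Real.sqrt (m₁^2 + m₂^2) :=
      mul_le_mul_of_nonneg_right c1 hMsq0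
    have c3 : KB * (nu + np) * Real.sqrt (m₁^2 + m₂^2) ≤
        Real.sqrt (m₁^2 + m₂^2) * Real.sqrt (m₁^2 + m₂^2) :=
      mul_le_mul_of_nonneg_right step hMsq0
    nlinarith only [c2, c3, hMsq2]
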